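/- arXiv:2503.05528 — 2 statements merged into one kernel-verified Lean document; each statement's English description precedes it below -/
import Mathlib

section
/- Let n1, n2, m ∈ ℕ, k1, k2 ∈ ℝ and 0 < ε ≤ 1. If Ext : {0,1}^{n1} × {0,1}^{n2} → {0,1}^m is a (k1, k2, ε) X1-strong two-source extractor, then Ext is a (k1, k2 + log₂(1/ε), 2ε) X1-strong two-source extractor against classical product-type knowledge. -/
open Matrix Kronecker BigOperators Finset ComplexOrder

/-- Bit strings of length `n`. -/
abbrev BS (n : ℕ) := Fin n → Bool

/-- Embedding of a bit into the field with two elements. -/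
def toZ2 (b : Bool) : ZMod 2 := if b then 1 else 0

/-- Inner product modulo 2 of two bit strings. -/
def ipBool {n : ℕ} (x y : BS n) : Bool := decide ((∑ i, toZ2 (x i) * toZ2 (y i)) = 1)

/-- Multiplication of a bit string by a matrix over F₂. -/
def mulVecBool {n : ℕ} (L : Matrix (Fin n) (Fin n) (ZMod 2)) (x : BS n) : BS n :=
  fun i => decide ((L.mulVec fun j => toZ2 (x j)) i = 1)

/-- The `deor` extractor associated to a family of matrices over F₂. -/
def deor {n m : ℕ} (A : Fin m → Matrix (Fin n) (Fin n) (ZMod 2)) (x y : BS n) : BS m :=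
  fun i => ipBool (mulVecBool (A i) x) y

/-- Trace norm of a complex matrix: `tr √(SᴴS)`. -/
noncomputable def traceNorm {B : Type*} [Fintype B] [DecidableEq B] (S : Matrix B B ℂ) : ℝ :=
  (((Matrix.posSemidef_conjTranspose_mul_self S).1.eigenvectorUnitary.1 *
    Matrix.diagonal ((fun r : ℝ => (r : ℂ)) ∘ Real.sqrt ∘ (Matrix.posSemidef_conjTranspose_mul_self S).1.eigenvalues) *
    (star (Matrix.posSemidef_conjTranspose_mul_self S).1.eigenvectorUnitary : Matrix B B ℂ)).trace).re

/-- Trace distance between two matrices. -/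
noncomputable def traceDist {B : Type*} [Fintype B] [DecidableEq B] (ρ σ : Matrix B B ℂ) : ℝ :=
  (1/2) * traceNorm (ρ - σ)

/-- A density matrix: positive semidefinite with unit trace. -/
def IsDensity {B : Type*} [Fintype B] (ρ : Matrix B B ℂ) : Prop :=
  ρ.PosSemidef ∧ ρ.trace = 1

/-- A cq-state given by its family of (subnormalized) conditional operators. -/
def IsCQ {X B : Type*} [Fintype X] [Fintype B] (ρ : X → Matrix B B ℂ) : Prop :=
  (∀ x, (ρ x).PosSemidef) ∧ (∑ x, (ρ x).trace) = 1

/-- The full matrix `Σ_x |x⟩⟨x| ⊗ ρ_{B∧x}` of a cq-state. -/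
noncomputable def cqMatrix {X B : Type*} [Fintype X] [DecidableEq X] [Fintype B]
    (ρ : X → Matrix B B ℂ) : Matrix (X × B) (X × B) ℂ :=
  ∑ x, (Matrix.single x x (1:ℂ)) ⊗ₖ ρ x

/-- Conditional min-entropy of a cq-state: the sup over density matrices σ and reals w with
`ρ_{B∧x} ≤ 2^{-w}·σ` for all `x` (Loewner order), of `w`; `⊥ = -∞` if no such pair exists. -/
noncomputable def qCondHmin {X B : Type*} [Fintype X] [Fintype B]
    (ρ : X → Matrix B B ℂ) : EReal :=
  sSup {z : EReal | ∃ w : ℝ, z = (w : EReal) ∧ ∃ σ : Matrix B B ℂ, σ.PosSemidef ∧ σ.trace = 1 ∧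
    ∀ x, (((2:ℝ) ^ (-w)) • σ - ρ x).PosSemidef}

/-- The maximally mixed state on `m` qubits. -/
noncomputable def mixed (m : ℕ) : Matrix (BS m) (BS m) ℂ := ((2:ℂ)^m)⁻¹ • 1

/-- A finitely supported probability distribution. -/
def IsDist {α : Type*} [Fintype α] (P : α → ℝ) : Prop := (∀ a, 0 ≤ P a) ∧ ∑ a, P a = 1

/-- Total variation distance. -/
noncomputable def TV {α : Type*} [Fintype α] (Q R : α → ℝ) : ℝ := (1/2) * ∑ a, |Q a - R a|

/-- Min-entropy of a distribution. -/
noncomputable def Hmin {X : Type*} [Fintype X] [Nonempty X] (P : X → ℝ) : ℝ :=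
  - Real.logb 2 (⨆ x, P x)

/-- Conditional min-entropy of a joint distribution. -/
noncomputable def HminCond {X Z : Type*} [Fintype X] [Nonempty X] [Fintype Z]
    (P : X → Z → ℝ) : ℝ :=
  - Real.logb 2 (∑ z, ⨆ x, P x z)

/-- `(k1,k2,ε)` X1-strong two-source extractor (no side information). -/
def IsStrongExt (n1 n2 m : ℕ) (Ext : BS n1 → BS n2 → BS m) (k1 k2 ε : ℝ) : Prop :=
  ∀ (P1 : BS n1 → ℝ) (P2 : BS n2 → ℝ), IsDist P1 → IsDist P2 →
    k1 ≤ Hmin P1 → k2 ≤ Hmin P2 →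
    TV (fun p : BS m × BS n1 => ∑ x2, if Ext p.2 x2 = p.1 then P1 p.2 * P2 x2 else 0)
       (fun p : BS m × BS n1 => ((2:ℝ)^m)⁻¹ * P1 p.2) ≤ ε

/-- `(k1,k2,ε)` X1-strong two-source extractor against classical product-type knowledge. -/
def IsStrongExtCPT (n1 n2 m : ℕ) (Ext : BS n1 → BS n2 → BS m) (k1 k2 ε : ℝ) : Prop :=
  ∀ (Z1 Z2 : Type) [Fintype Z1] [Fintype Z2],
    ∀ (P1 : BS n1 → Z1 → ℝ) (P2 : BS n2 → Z2 → ℝ),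
    IsDist (fun p : BS n1 × Z1 => P1 p.1 p.2) →
    IsDist (fun p : BS n2 × Z2 => P2 p.1 p.2) →
    k1 ≤ HminCond P1 → k2 ≤ HminCond P2 →
    TV (fun q : BS m × BS n1 × Z1 × Z2 =>
          ∑ x2, if Ext q.2.1 x2 = q.1 then P1 q.2.1 q.2.2.1 * P2 x2 q.2.2.2 else 0)
       (fun q : BS m × BS n1 × Z1 × Z2 =>
          ((2:ℝ)^m)⁻¹ * P1 q.2.1 q.2.2.1 * ∑ x2, P2 x2 q.2.2.2) ≤ ε

/-- `(k1,k2,ε)` weak two-source extractor against classical product-type knowledge. -/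
def IsWeakExtCPT (n1 n2 m : ℕ) (Ext : BS n1 → BS n2 → BS m) (k1 k2 ε : ℝ) : Prop :=
  ∀ (Z1 Z2 : Type) [Fintype Z1] [Fintype Z2],
    ∀ (P1 : BS n1 → Z1 → ℝ) (P2 : BS n2 → Z2 → ℝ),
    IsDist (fun p : BS n1 × Z1 => P1 p.1 p.2) →
    IsDist (fun p : BS n2 × Z2 => P2 p.1 p.2) →
    k1 ≤ HminCond P1 → k2 ≤ HminCond P2 →
    TV (fun q : BS m × Z1 × Z2 =>
          ∑ x1, ∑ x2, if Ext x1 x2 = q.1 then P1 x1 q.2.1 * P2 x2 q.2.2 else 0)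
       (fun q : BS m × Z1 × Z2 =>
          ((2:ℝ)^m)⁻¹ * (∑ x1, P1 x1 q.2.1) * ∑ x2, P2 x2 q.2.2) ≤ ε

/-- `(k1,k2,ε)` X1-strong two-source extractor against classical knowledge in the Markov model. -/
def IsStrongExtCMarkov (n1 n2 m : ℕ) (Ext : BS n1 → BS n2 → BS m) (k1 k2 ε : ℝ) : Prop :=
  ∀ (C : Type) [Fintype C], ∀ (P : BS n1 → BS n2 → C → ℝ),
    IsDist (fun q : BS n1 × BS n2 × C => P q.1 q.2.1 q.2.2) →
    (∀ x1 x2 c, P x1 x2 c * (∑ x1', ∑ x2', P x1' x2' c)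
        = (∑ x2', P x1 x2' c) * (∑ x1', P x1' x2 c)) →
    k1 ≤ HminCond (fun x1 c => ∑ x2, P x1 x2 c) →
    k2 ≤ HminCond (fun x2 c => ∑ x1, P x1 x2 c) →
    TV (fun q : BS m × BS n1 × C => ∑ x2, if Ext q.2.1 x2 = q.1 then P q.2.1 x2 q.2.2 else 0)
       (fun q : BS m × BS n1 × C => ((2:ℝ)^m)⁻¹ * ∑ x2, P q.2.1 x2 q.2.2) ≤ ε

/-- The output cq-state `ρ_{Ext(X1,X2) X1 C1 C2}` for product-type quantum side information. -/
noncomputable def qStrongOut {n1 n2 m : ℕ} {C1 C2 : Type}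
    [Fintype C1] [Fintype C2]
    (Ext : BS n1 → BS n2 → BS m)
    (ρ1 : BS n1 → Matrix C1 C1 ℂ) (ρ2 : BS n2 → Matrix C2 C2 ℂ) :
    Matrix (BS m × (BS n1 × C1) × C2) (BS m × (BS n1 × C1) × C2) ℂ :=
  ∑ x1, ∑ x2, (Matrix.single (Ext x1 x2) (Ext x1 x2) (1:ℂ)) ⊗ₖ
    (((Matrix.single x1 x1 (1:ℂ)) ⊗ₖ ρ1 x1) ⊗ₖ ρ2 x2)

/-- `(k1,k2,ε)` X1-strong two-source extractor against quantum product-type knowledge. -/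
def IsStrongExtQPT (n1 n2 m : ℕ) (Ext : BS n1 → BS n2 → BS m) (k1 k2 ε : ℝ) : Prop :=
  ∀ (C1 C2 : Type) [Fintype C1] [DecidableEq C1] [Fintype C2] [DecidableEq C2],
    ∀ (ρ1 : BS n1 → Matrix C1 C1 ℂ) (ρ2 : BS n2 → Matrix C2 C2 ℂ),
    IsCQ ρ1 → IsCQ ρ2 →
    (k1 : EReal) ≤ qCondHmin ρ1 → (k2 : EReal) ≤ qCondHmin ρ2 →
    traceDist (qStrongOut Ext ρ1 ρ2) (mixed m ⊗ₖ (cqMatrix ρ1 ⊗ₖ ∑ x2, ρ2 x2)) ≤ ε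

/-- `(k1,k2,ε)` weak two-source extractor against quantum product-type knowledge. -/
def IsWeakExtQPT (n1 n2 m : ℕ) (Ext : BS n1 → BS n2 → BS m) (k1 k2 ε : ℝ) : Prop :=
  ∀ (C1 C2 : Type) [Fintype C1] [DecidableEq C1] [Fintype C2] [DecidableEq C2],
    ∀ (ρ1 : BS n1 → Matrix C1 C1 ℂ) (ρ2 : BS n2 → Matrix C2 C2 ℂ),
    IsCQ ρ1 → IsCQ ρ2 →
    (k1 : EReal) ≤ qCondHmin ρ1 → (k2 : EReal) ≤ qCondHmin ρ2 →
    traceDist (∑ x1, ∑ x2, (Matrix.single (Ext x1 x2) (Ext x1 x2) (1:ℂ)) ⊗ₖ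
        ((ρ1 x1) ⊗ₖ ρ2 x2))
      (mixed m ⊗ₖ ((∑ x1, ρ1 x1) ⊗ₖ ∑ x2, ρ2 x2)) ≤ ε

/-- `(k1,k2,ε)` X1-strong two-source extractor against quantum knowledge in the Markov model,
in decomposed form. -/
def IsStrongExtQMarkov (n1 n2 m : ℕ) (Ext : BS n1 → BS n2 → BS m) (k1 k2 ε : ℝ) : Prop :=
  ∀ (Z C1 C2 : Type) [Fintype Z] [DecidableEq Z]
      [Fintype C1] [DecidableEq C1] [Fintype C2] [DecidableEq C2],
    ∀ (P : Z → ℝ) (ρ1 : Z → BS n1 → Matrix C1 C1 ℂ) (ρ2 : Z → BS n2 → Matrix C2 C2 ℂ),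
    IsDist P → (∀ z, IsCQ (ρ1 z)) → (∀ z, IsCQ (ρ2 z)) →
    (k1 : EReal) ≤ qCondHmin (fun x1 : BS n1 =>
      ∑ z, P z • (((ρ1 z x1) ⊗ₖ ∑ x2, ρ2 z x2) ⊗ₖ Matrix.single z z (1:ℂ))) →
    (k2 : EReal) ≤ qCondHmin (fun x2 : BS n2 =>
      ∑ z, P z • (((∑ x1, ρ1 z x1) ⊗ₖ ρ2 z x2) ⊗ₖ Matrix.single z z (1:ℂ))) →
    traceDist
      (∑ x1, ∑ x2, ∑ z, P z •
        ((Matrix.single (Ext x1 x2) (Ext x1 x2) (1:ℂ)) ⊗ₖ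
          ((Matrix.single x1 x1 (1:ℂ)) ⊗ₖ
            (((ρ1 z x1) ⊗ₖ ρ2 z x2) ⊗ₖ Matrix.single z z (1:ℂ)))))
      (mixed m ⊗ₖ cqMatrix (fun x1 : BS n1 =>
        ∑ z, P z • (((ρ1 z x1) ⊗ₖ ∑ x2, ρ2 z x2) ⊗ₖ Matrix.single z z (1:ℂ))))
      ≤ ε

private lemma aux_sup_pos {α : Type*} [Fintype α] [Nonempty α] (P : α → ℝ)
    (h0 : ∀ a, 0 ≤ P a) (h1 : ∑ a, P a = 1) : 0 < ⨆ a, P a := by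
  obtain ⟨a, ha⟩ : ∃ a, 0 < P a := by
    by_contra hc
    push_neg at hc
    have h2 : ∑ a, P a = 0 := Finset.sum_eq_zero fun a _ => le_antisymm (hc a) (h0 a)
    rw [h2] at h1; norm_num at h1
  exact ha.trans_le (le_ciSup (Set.Finite.bddAbove (Set.finite_range P)) a)

private lemma aux_hmin_iff {s k : ℝ} (hs : 0 < s) :
    k ≤ -Real.logb 2 s ↔ s ≤ (2:ℝ) ^ (-k) := by
  rw [le_neg, Real.logb_le_iff_le_rpow one_lt_two hs]

theorem stmt2 {n1 n2 m : ℕ} (Ext : BS n1 → BS n2 → BS m) (k1 k2 ε : ℝ)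
    (hε : 0 < ε) (hε1 : ε ≤ 1)
    (h : IsStrongExt n1 n2 m Ext k1 k2 ε) :
    IsStrongExtCPT n1 n2 m Ext k1 (k2 + Real.logb 2 (1/ε)) (2*ε) := by
  intro Z1 Z2 _ _ P1 P2 hd1 hd2 hk1 hk2
  classical
  obtain ⟨h1nn, h1sum⟩ := hd1
  obtain ⟨h2nn, h2sum⟩ := hd2
  have hP1nn : ∀ x z, 0 ≤ P1 x z := fun x z => h1nn (x, z)
  have hP2nn : ∀ x z, 0 ≤ P2 x z := fun x z => h2nn (x, z)
  set Q1 : BS n1 → ℝ := fun x => ∑ z, P1 x z with hQ1def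
  set W : Z2 → ℝ := fun z => ∑ x, P2 x z with hWdef
  have hQ1nn : ∀ x, 0 ≤ Q1 x := fun x => Finset.sum_nonneg fun z _ => hP1nn x z
  have hWnn : ∀ z, 0 ≤ W z := fun z => Finset.sum_nonneg fun x _ => hP2nn x z
  have hQ1sum : ∑ x, Q1 x = 1 := by
    rw [← h1sum, Fintype.sum_prod_type]
  have hWsum : ∑ z, W z = 1 := by
    rw [← h2sum, Fintype.sum_prod_type]
    exact Finset.sum_comm
  -- min-entropy of the marginal Q1
  have hk1' : k1 ≤ Hmin Q1 := by
    have hs : 0 < ⨆ x, Q1 x := aux_sup_pos Q1 hQ1nn hQ1sum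
    have hle : (⨆ x, Q1 x) ≤ ∑ z, ⨆ x, P1 x z := by
      apply ciSup_le
      intro x
      exact Finset.sum_le_sum fun z _ =>
        le_ciSup (Set.Finite.bddAbove (Set.finite_range fun x' => P1 x' z)) x
    have hS1 : 0 < ∑ z, ⨆ x, P1 x z := lt_of_lt_of_le hs hle
    simp only [Hmin]
    rw [aux_hmin_iff hs]
    simp only [HminCond] at hk1
    exact le_trans hle ((aux_hmin_iff hS1).mp hk1)
  -- bound on the sum of conditional suprema for P2
  have hsup2nn : ∀ z, 0 ≤ ⨆ x, P2 x z := fun z =>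
    le_trans (hP2nn (Classical.arbitrary _) z)
      (le_ciSup (Set.Finite.bddAbove (Set.finite_range fun x => P2 x z)) _)
  have hS2pos : 0 < ∑ z, ⨆ x, P2 x z := by
    obtain ⟨p, hp⟩ : ∃ p : BS n2 × Z2, 0 < P2 p.1 p.2 := by
      by_contra hc
      push_neg at hc
      have h0 : ∑ p : BS n2 × Z2, P2 p.1 p.2 = 0 :=
        Finset.sum_eq_zero fun p _ => le_antisymm (hc p) (h2nn p)
      rw [h0] at h2sum; norm_num at h2sum
    calc (0:ℝ) < P2 p.1 p.2 := hp
      _ ≤ ⨆ x, P2 x p.2 :=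
        le_ciSup (Set.Finite.bddAbove (Set.finite_range fun x => P2 x p.2)) _
      _ ≤ ∑ z, ⨆ x, P2 x z := Finset.single_le_sum (fun z _ => hsup2nn z) (Finset.mem_univ _)
  have hS2 : ∑ z, ⨆ x, P2 x z ≤ (2:ℝ) ^ (-k2) * ε := by
    simp only [HminCond] at hk2
    have h1 := (aux_hmin_iff hS2pos).mp hk2
    calc ∑ z, ⨆ x, P2 x z ≤ (2:ℝ) ^ (-(k2 + Real.logb 2 (1/ε))) := h1
      _ = (2:ℝ) ^ (-k2) * ε := by
        rw [neg_add, Real.rpow_add two_pos, one_div, Real.logb_inv, neg_neg,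
          Real.rpow_logb two_pos (by norm_num) hε]
  -- good/bad split
  set good : Z2 → Prop := fun z => (⨆ x, P2 x z) ≤ (2:ℝ) ^ (-k2) * W z with hgooddef
  have hbad : ∑ z2 ∈ Finset.univ.filter (fun z => ¬ good z), W z2 ≤ ε := by
    have h1 : (2:ℝ) ^ (-k2) * ∑ z2 ∈ Finset.univ.filter (fun z => ¬ good z), W z2
        ≤ ∑ z2 ∈ Finset.univ.filter (fun z => ¬ good z), ⨆ x, P2 x z2 := by
      rw [Finset.mul_sum]
      refine Finset.sum_le_sum fun z hz => ?_
      have h2 := (Finset.mem_filter.mp hz).2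
      simp only [hgooddef] at h2
      exact le_of_lt (lt_of_not_ge h2)
    have h3 : ∑ z2 ∈ Finset.univ.filter (fun z => ¬ good z), ⨆ x, P2 x z2
        ≤ ∑ z, ⨆ x, P2 x z :=
      Finset.sum_le_sum_of_subset_of_nonneg (Finset.filter_subset _ _) fun z _ _ => hsup2nn z
    have h4 : (2:ℝ) ^ (-k2) * ∑ z2 ∈ Finset.univ.filter (fun z => ¬ good z), W z2
        ≤ (2:ℝ) ^ (-k2) * ε := le_trans h1 (le_trans h3 hS2)
    exact le_of_mul_le_mul_left h4 (Real.rpow_pos_of_pos two_pos _)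
  -- the per-z2 deviation
  set c : BS m → BS n1 → Z2 → ℝ := fun e x1 z2 =>
    |(∑ x2, if Ext x1 x2 = e then P2 x2 z2 else 0) - ((2:ℝ)^m)⁻¹ * W z2| with hcdef
  set T : Z2 → ℝ := fun z2 => ∑ e : BS m, ∑ x1 : BS n1, Q1 x1 * c e x1 z2 with hTdef
  have hsumA : ∀ (x1 : BS n1) (z2 : Z2),
      ∑ e : BS m, (∑ x2, if Ext x1 x2 = e then P2 x2 z2 else 0) = W z2 := by
    intro x1 z2
    rw [Finset.sum_comm]
    exact Finset.sum_congr rfl fun x2 _ => by simp [Finset.sum_ite_eq]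
  have hcard : ((Fintype.card (BS m)) : ℝ) = (2:ℝ)^m := by
    rw [show Fintype.card (BS m) = 2^m by simp [BS, Fintype.card_fun]]
    push_cast
    ring
  have hTall : ∀ z2, T z2 ≤ 2 * W z2 := by
    intro z2
    have hb : ∀ (e : BS m) (x1 : BS n1), Q1 x1 * c e x1 z2 ≤
        Q1 x1 * (∑ x2, if Ext x1 x2 = e then P2 x2 z2 else 0)
          + Q1 x1 * (((2:ℝ)^m)⁻¹ * W z2) := by
      intro e x1
      have hA : 0 ≤ ∑ x2, if Ext x1 x2 = e then P2 x2 z2 else 0 :=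
        Finset.sum_nonneg fun x2 _ => by
          split
          · exact hP2nn x2 z2
          · exact le_refl 0
      have hB : (0:ℝ) ≤ ((2:ℝ)^m)⁻¹ * W z2 := mul_nonneg (by positivity) (hWnn z2)
      have habs : c e x1 z2 ≤ (∑ x2, if Ext x1 x2 = e then P2 x2 z2 else 0)
          + ((2:ℝ)^m)⁻¹ * W z2 := by
        simp only [hcdef]
        rw [abs_le]
        constructor <;> linarith
      calc Q1 x1 * c e x1 z2
          ≤ Q1 x1 * ((∑ x2, if Ext x1 x2 = e then P2 x2 z2 else 0) + ((2:ℝ)^m)⁻¹ * W z2) :=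
            mul_le_mul_of_nonneg_left habs (hQ1nn x1)
        _ = Q1 x1 * (∑ x2, if Ext x1 x2 = e then P2 x2 z2 else 0)
            + Q1 x1 * (((2:ℝ)^m)⁻¹ * W z2) := by ring
    have e1 : ∑ e : BS m, ∑ x1 : BS n1,
        Q1 x1 * (∑ x2, if Ext x1 x2 = e then P2 x2 z2 else 0) = W z2 := by
      rw [Finset.sum_comm]
      calc ∑ x1 : BS n1, ∑ e : BS m, Q1 x1 * (∑ x2, if Ext x1 x2 = e then P2 x2 z2 else 0)
          = ∑ x1 : BS n1, Q1 x1 * W z2 := by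
            refine Finset.sum_congr rfl fun x1 _ => ?_
            rw [← Finset.mul_sum, hsumA x1 z2]
        _ = W z2 := by rw [← Finset.sum_mul, hQ1sum, one_mul]
    have e2 : ∑ e : BS m, ∑ x1 : BS n1, Q1 x1 * (((2:ℝ)^m)⁻¹ * W z2) = W z2 := by
      have e2' : ∀ e : BS m, ∑ x1 : BS n1, Q1 x1 * (((2:ℝ)^m)⁻¹ * W z2)
          = ((2:ℝ)^m)⁻¹ * W z2 := fun e => by
        rw [← Finset.sum_mul, hQ1sum, one_mul]
      rw [Finset.sum_congr rfl fun e _ => e2' e, Finset.sum_const, Finset.card_univ,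
        nsmul_eq_mul, hcard]
      have : ((2:ℝ)^m) ≠ 0 := by positivity
      field_simp
    calc T z2 ≤ ∑ e : BS m, ∑ x1 : BS n1,
        (Q1 x1 * (∑ x2, if Ext x1 x2 = e then P2 x2 z2 else 0)
          + Q1 x1 * (((2:ℝ)^m)⁻¹ * W z2)) := by
          simp only [hTdef]
          exact Finset.sum_le_sum fun e _ => Finset.sum_le_sum fun x1 _ => hb e x1
      _ = 2 * W z2 := by
          simp only [Finset.sum_add_distrib]
          rw [e1, e2]; ring
  have hTgood : ∀ z2, good z2 → T z2 ≤ 2 * ε * W z2 := by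
    intro z2 hg
    simp only [hgooddef] at hg
    rcases eq_or_lt_of_le (hWnn z2) with hW0 | hWpos
    · have hz : ∀ x2, P2 x2 z2 = 0 := by
        intro x2
        have h0 := (Finset.sum_eq_zero_iff_of_nonneg
          (fun x (_ : x ∈ Finset.univ) => hP2nn x z2)).mp hW0.symm
        exact h0 x2 (Finset.mem_univ _)
      have hc0 : ∀ (e : BS m) (x1 : BS n1), c e x1 z2 = 0 := by
        intro e x1
        simp [hcdef, hz, ← hW0]
      simp [hTdef, hc0, ← hW0]
    · have hWne : W z2 ≠ 0 := ne_of_gt hWpos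
      have hd2c : IsDist (fun x2 => P2 x2 z2 / W z2) :=
        ⟨fun x => div_nonneg (hP2nn x z2) (hWnn z2), by
          rw [← Finset.sum_div]
          exact div_self hWne⟩
      have hsupc : 0 < ⨆ x, P2 x z2 / W z2 := aux_sup_pos _ hd2c.1 hd2c.2
      have hkc : k2 ≤ Hmin (fun x2 => P2 x2 z2 / W z2) := by
        simp only [Hmin]
        rw [aux_hmin_iff hsupc]
        apply ciSup_le
        intro x
        rw [div_le_iff₀ hWpos]
        calc P2 x z2 ≤ ⨆ x', P2 x' z2 :=
            le_ciSup (Set.Finite.bddAbove (Set.finite_range fun x' => P2 x' z2)) x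
          _ ≤ (2:ℝ)^(-k2) * W z2 := hg
      have hTV := h Q1 (fun x2 => P2 x2 z2 / W z2) ⟨hQ1nn, hQ1sum⟩ hd2c hk1' hkc
      simp only [TV, Fintype.sum_prod_type] at hTV
      have hpt : ∀ (e : BS m) (x1 : BS n1),
          Q1 x1 * c e x1 z2 = W z2 *
          |(∑ x2, if Ext x1 x2 = e then Q1 x1 * (P2 x2 z2 / W z2) else 0)
            - ((2:ℝ)^m)⁻¹ * Q1 x1| := by
        intro e x1
        have e3 : (∑ x2, if Ext x1 x2 = e then Q1 x1 * (P2 x2 z2 / W z2) else 0)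
            - ((2:ℝ)^m)⁻¹ * Q1 x1
            = (Q1 x1 / W z2) *
              ((∑ x2, if Ext x1 x2 = e then P2 x2 z2 else 0) - ((2:ℝ)^m)⁻¹ * W z2) := by
          have t1 : ∀ x2 : BS n2, (if Ext x1 x2 = e then Q1 x1 * (P2 x2 z2 / W z2) else 0)
              = (Q1 x1 / W z2) * (if Ext x1 x2 = e then P2 x2 z2 else 0) := by
            intro x2
            split_ifs
            · ring
            · ring
          rw [mul_sub, Finset.sum_congr rfl fun x2 _ => t1 x2, ← Finset.mul_sum]
          congr 1
          rw [show Q1 x1 / W z2 * (((2:ℝ)^m)⁻¹ * W z2)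
              = ((2:ℝ)^m)⁻¹ * Q1 x1 * (W z2 / W z2) from by ring, div_self hWne, mul_one]
        rw [e3, abs_mul, abs_of_nonneg (div_nonneg (hQ1nn x1) (hWnn z2)), ← mul_assoc,
          show W z2 * (Q1 x1 / W z2) = Q1 x1 from by rw [mul_comm, div_mul_cancel₀ _ hWne]]
      have hsum2 : ∑ e : BS m, ∑ x1 : BS n1,
          |(∑ x2, if Ext x1 x2 = e then Q1 x1 * (P2 x2 z2 / W z2) else 0)
            - ((2:ℝ)^m)⁻¹ * Q1 x1| ≤ 2 * ε := by
        linarith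
      calc T z2 = W z2 * ∑ e : BS m, ∑ x1 : BS n1,
          |(∑ x2, if Ext x1 x2 = e then Q1 x1 * (P2 x2 z2 / W z2) else 0)
            - ((2:ℝ)^m)⁻¹ * Q1 x1| := by
            simp only [hTdef]
            rw [Finset.mul_sum]
            refine Finset.sum_congr rfl fun e _ => ?_
            rw [Finset.mul_sum]
            exact Finset.sum_congr rfl fun x1 _ => hpt e x1
        _ ≤ W z2 * (2 * ε) := mul_le_mul_of_nonneg_left hsum2 (hWnn z2)
        _ = 2 * ε * W z2 := by ring
  -- assemble
  simp only [TV, Fintype.sum_prod_type]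
  have hfac : ∀ (e : BS m) (x1 : BS n1) (z1 : Z1) (z2 : Z2),
      |(∑ x2, if Ext x1 x2 = e then P1 x1 z1 * P2 x2 z2 else 0)
        - ((2:ℝ)^m)⁻¹ * P1 x1 z1 * ∑ x2, P2 x2 z2|
      = P1 x1 z1 * c e x1 z2 := by
    intro e x1 z1 z2
    have t1 : ∀ x2 : BS n2, (if Ext x1 x2 = e then P1 x1 z1 * P2 x2 z2 else 0)
        = P1 x1 z1 * (if Ext x1 x2 = e then P2 x2 z2 else 0) := by
      intro x2
      split_ifs
      · ring
      · ring
    have e5 : (∑ x2, if Ext x1 x2 = e then P1 x1 z1 * P2 x2 z2 else 0)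
        - ((2:ℝ)^m)⁻¹ * P1 x1 z1 * ∑ x2, P2 x2 z2
        = P1 x1 z1 * ((∑ x2, if Ext x1 x2 = e then P2 x2 z2 else 0) - ((2:ℝ)^m)⁻¹ * W z2) := by
      rw [mul_sub, Finset.sum_congr rfl fun x2 _ => t1 x2, ← Finset.mul_sum]
      congr 1
      ring
    rw [e5, abs_mul, abs_of_nonneg (hP1nn x1 z1)]
  have key : (∑ e : BS m, ∑ x1 : BS n1, ∑ z1 : Z1, ∑ z2 : Z2,
      |(∑ x2, if Ext x1 x2 = e then P1 x1 z1 * P2 x2 z2 else 0) -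
        ((2:ℝ)^m)⁻¹ * P1 x1 z1 * ∑ x2, P2 x2 z2|) = ∑ z2, T z2 := by
    calc (∑ e : BS m, ∑ x1 : BS n1, ∑ z1 : Z1, ∑ z2 : Z2,
        |(∑ x2, if Ext x1 x2 = e then P1 x1 z1 * P2 x2 z2 else 0) -
          ((2:ℝ)^m)⁻¹ * P1 x1 z1 * ∑ x2, P2 x2 z2|)
        = ∑ e : BS m, ∑ x1 : BS n1, ∑ z1 : Z1, ∑ z2 : Z2, P1 x1 z1 * c e x1 z2 :=
        Finset.sum_congr rfl fun e _ => Finset.sum_congr rfl fun x1 _ =>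
          Finset.sum_congr rfl fun z1 _ => Finset.sum_congr rfl fun z2 _ => hfac e x1 z1 z2
      _ = ∑ e : BS m, ∑ x1 : BS n1, ∑ z2 : Z2, Q1 x1 * c e x1 z2 := by
        refine Finset.sum_congr rfl fun e _ => Finset.sum_congr rfl fun x1 _ => ?_
        rw [Finset.sum_comm]
        refine Finset.sum_congr rfl fun z2 _ => ?_
        rw [← Finset.sum_mul]
      _ = ∑ z2 : Z2, ∑ e : BS m, ∑ x1 : BS n1, Q1 x1 * c e x1 z2 := by
        calc (∑ e : BS m, ∑ x1 : BS n1, ∑ z2 : Z2, Q1 x1 * c e x1 z2)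
            = ∑ e : BS m, ∑ z2 : Z2, ∑ x1 : BS n1, Q1 x1 * c e x1 z2 :=
              Finset.sum_congr rfl fun e _ => Finset.sum_comm
          _ = ∑ z2 : Z2, ∑ e : BS m, ∑ x1 : BS n1, Q1 x1 * c e x1 z2 := Finset.sum_comm
      _ = ∑ z2, T z2 := rfl
  rw [key, ← Finset.sum_filter_add_sum_filter_not Finset.univ good]
  have hgoodsum : ∑ z2 ∈ Finset.univ.filter good, T z2 ≤ 2 * ε := by
    calc ∑ z2 ∈ Finset.univ.filter good, T z2
        ≤ ∑ z2 ∈ Finset.univ.filter good, 2 * ε * W z2 :=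
          Finset.sum_le_sum fun z2 hz2 => hTgood z2 (Finset.mem_filter.mp hz2).2
      _ ≤ ∑ z2, 2 * ε * W z2 :=
          Finset.sum_le_sum_of_subset_of_nonneg (Finset.filter_subset _ _)
            fun z2 _ _ => mul_nonneg (by linarith) (hWnn z2)
      _ = 2 * ε := by rw [← Finset.mul_sum, hWsum, mul_one]
  have hbadsum : ∑ z2 ∈ Finset.univ.filter (fun z => ¬ good z), T z2 ≤ 2 * ε := by
    calc ∑ z2 ∈ Finset.univ.filter (fun z => ¬ good z), T z2
        ≤ ∑ z2 ∈ Finset.univ.filter (fun z => ¬ good z), 2 * W z2 :=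
          Finset.sum_le_sum fun z2 _ => hTall z2
      _ = 2 * ∑ z2 ∈ Finset.univ.filter (fun z => ¬ good z), W z2 := by
          rw [Finset.mul_sum]
      _ ≤ 2 * ε := by linarith
  linarith
end

section
/- Let n1, n2, m ∈ ℕ and k1, k2 ∈ ℝ. Let {f_{x1} : {0,1}^{n2} → {0,1}^m}_{x1 ∈ {0,1}^{n1}} be a two-universal family of hash functions. Let X1 be a random variable on {0,1}^{n1} with H_min(X1) ≥ k1, and let P_{X2Z2} be a finite joint distribution, independent of X1, with H_min(X2|Z2) ≥ k2. Then Σ_{x1} P_{X1}(x1) · TV( law of (f_{x1}(X2), Z2), U_m × P_{Z2} ) ≤ 2^{−(2 + k1 + k2 − n1 − m)/2}. -/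
open Matrix Kronecker BigOperators Finset ComplexOrder

section Aux19

private lemma aux_fiber_sum {α β : Type*} [Fintype α] [Fintype β] [DecidableEq β]
    (g : α → β) (h : α → ℝ) :
    ∑ u, ∑ x ∈ Finset.univ.filter (fun x => g x = u), h x = ∑ x, h x := by
  simp only [Finset.sum_filter]
  rw [Finset.sum_comm]
  simp

private lemma aux_fiber_sq {α β : Type*} [Fintype α] [Fintype β] [DecidableEq β]
    (g : α → β) (h : α → ℝ) :
    ∑ u, (∑ x ∈ Finset.univ.filter (fun x => g x = u), h x) ^ 2
      = ∑ x, ∑ y, if g x = g y then h x * h y else 0 := by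
  have key : ∀ x y : α, (∑ u, (if g x = u then h x else 0) * (if g y = u then h y else 0))
      = if g x = g y then h x * h y else 0 := by
    intro x y
    by_cases hxy : g x = g y
    · rw [if_pos hxy, hxy]
      rw [Finset.sum_eq_single (g y)]
      · simp
      · intro u _ hu
        have h2 : ¬ (g y = u) := fun hh => hu hh.symm
        simp [h2]
      · simp
    · rw [if_neg hxy]
      apply Finset.sum_eq_zero
      intro u _
      by_cases h1 : g x = u
      · have h2 : ¬ (g y = u) := fun h2 => hxy (h1.trans h2.symm)
        simp [h2]
      · simp [h1]
  calc ∑ u, (∑ x ∈ Finset.univ.filter (fun x => g x = u), h x) ^ 2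
      = ∑ u, ∑ x, ∑ y, (if g x = u then h x else 0) * (if g y = u then h y else 0) := by
        simp only [Finset.sum_filter, sq, Finset.sum_mul_sum]
    _ = ∑ x, ∑ u, ∑ y, (if g x = u then h x else 0) * (if g y = u then h y else 0) :=
        Finset.sum_comm
    _ = ∑ x, ∑ y, ∑ u, (if g x = u then h x else 0) * (if g y = u then h y else 0) :=
        Finset.sum_congr rfl fun x _ => Finset.sum_comm
    _ = ∑ x, ∑ y, if g x = g y then h x * h y else 0 := by simp only [key]

end Aux19

theorem stmt19 {n1 n2 m : ℕ} (k1 k2 : ℝ)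
    (f : BS n1 → BS n2 → BS m)
    (huniv : ∀ x2 x2' : BS n2, x2 ≠ x2' →
      ((Finset.univ.filter (fun x1 : BS n1 => f x1 x2 = f x1 x2')).card : ℝ) / 2^n1
        ≤ ((2:ℝ)^m)⁻¹)
    (P1 : BS n1 → ℝ) (hP1 : IsDist P1) (hk1 : k1 ≤ Hmin P1)
    {Z2 : Type} [Fintype Z2] (P2 : BS n2 → Z2 → ℝ)
    (hP2 : IsDist fun p : BS n2 × Z2 => P2 p.1 p.2) (hk2 : k2 ≤ HminCond P2) :
    ∑ x1, P1 x1 *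
      TV (fun q : BS m × Z2 =>
            ∑ x2 ∈ Finset.univ.filter (fun x2 : BS n2 => f x1 x2 = q.1), P2 x2 q.2)
         (fun q : BS m × Z2 => ((2:ℝ)^m)⁻¹ * ∑ x2, P2 x2 q.2)
      ≤ (2:ℝ) ^ (-(2 + k1 + k2 - (n1:ℝ) - (m:ℝ))/2) := by
  classical
  obtain ⟨hP1nn, hP1sum⟩ := hP1
  obtain ⟨hP2nn', hP2sum'⟩ := hP2
  have hP2nn : ∀ x2 z, 0 ≤ P2 x2 z := fun x2 z => hP2nn' (x2, z)
  -- cardinalities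
  have hcard1 : ((Finset.univ : Finset (BS n1)).card : ℝ) = (2:ℝ)^n1 := by
    rw [Finset.card_univ]
    simp [BS]
  have hcardm : ((Finset.univ : Finset (BS m)).card : ℝ) = (2:ℝ)^m := by
    rw [Finset.card_univ]
    simp [BS]
  -- basic distributions
  set PZ : Z2 → ℝ := fun z => ∑ x2, P2 x2 z with hPZ
  have hPZnn : ∀ z, 0 ≤ PZ z := fun z => Finset.sum_nonneg fun x2 _ => hP2nn x2 z
  have hPZsum : ∑ z, PZ z = 1 := by
    rw [Fintype.sum_prod_type] at hP2sum'
    simp only [hPZ]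
    rw [Finset.sum_comm]
    exact hP2sum'
  have hP2le : ∀ x2 z, P2 x2 z ≤ PZ z := fun x2 z =>
    Finset.single_le_sum (fun x _ => hP2nn x z) (Finset.mem_univ x2)
  have hPZzero : ∀ z, PZ z = 0 → ∀ x2, P2 x2 z = 0 := fun z hz x2 =>
    le_antisymm (hz ▸ hP2le x2 z) (hP2nn x2 z)
  set Q : BS n1 → BS m → Z2 → ℝ :=
    fun x1 u z => ∑ x2 ∈ Finset.univ.filter (fun x2 => f x1 x2 = u), P2 x2 z with hQ
  set D : BS n1 → BS m → Z2 → ℝ :=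
    fun x1 u z => Q x1 u z - ((2:ℝ)^m)⁻¹ * PZ z with hD
  set W : BS n1 → ℝ :=
    fun x1 => ∑ q : BS m × Z2, (D x1 q.1 q.2)^2 / PZ q.2 with hW
  have hQsum : ∀ x1 z, ∑ u, Q x1 u z = PZ z := by
    intro x1 z
    simp only [hQ, hPZ]
    exact aux_fiber_sum (fun x2 => f x1 x2) (fun x2 => P2 x2 z)
  have hWnn : ∀ x1, 0 ≤ W x1 := fun x1 =>
    Finset.sum_nonneg fun q _ => div_nonneg (sq_nonneg _) (hPZnn q.2)
  -- min-entropy consequences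
  have hP1le : ∀ x1, P1 x1 ≤ (2:ℝ)^(-k1) := by
    have hx1 : ∃ x1, 0 < P1 x1 := by
      by_contra h
      push_neg at h
      have h0 : ∑ x1, P1 x1 = 0 :=
        le_antisymm (Finset.sum_nonpos fun x1 _ => h x1)
          (Finset.sum_nonneg fun x1 _ => hP1nn x1)
      rw [hP1sum] at h0
      norm_num at h0
    obtain ⟨x0, hx0⟩ := hx1
    have hbdd : BddAbove (Set.range P1) := Set.Finite.bddAbove (Set.finite_range P1)
    have hle : ∀ x1, P1 x1 ≤ ⨆ x, P1 x := fun x1 => le_ciSup hbdd x1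
    have hpos : 0 < ⨆ x, P1 x := lt_of_lt_of_le hx0 (hle x0)
    have hk1' : Real.logb 2 (⨆ x, P1 x) ≤ -k1 := by
      simp only [Hmin] at hk1
      linarith
    have := (Real.logb_le_iff_le_rpow one_lt_two hpos).mp hk1'
    exact fun x1 => le_trans (hle x1) this
  set M : Z2 → ℝ := fun z => ⨆ x2, P2 x2 z with hM
  have hMle : ∀ x2 z, P2 x2 z ≤ M z := fun x2 z => by
    simp only [hM]
    exact le_ciSup (f := fun x2 => P2 x2 z) (Set.Finite.bddAbove (Set.finite_range _)) x2
  have hMnn : ∀ z, 0 ≤ M z := fun z =>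
    le_trans (hP2nn (Classical.arbitrary _) z) (hMle _ z)
  have hMsum : ∑ z, M z ≤ (2:ℝ)^(-k2) := by
    have hx2 : ∃ p : BS n2 × Z2, 0 < P2 p.1 p.2 := by
      by_contra h
      push_neg at h
      have h0 : ∑ p : BS n2 × Z2, P2 p.1 p.2 = 0 :=
        le_antisymm (Finset.sum_nonpos fun p _ => h p)
          (Finset.sum_nonneg fun p _ => hP2nn' p)
      rw [hP2sum'] at h0
      norm_num at h0
    obtain ⟨⟨x0, z0⟩, hx0⟩ := hx2
    have hpos : 0 < ∑ z, M z :=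
      lt_of_lt_of_le hx0 (le_trans (hMle x0 z0)
        (Finset.single_le_sum (fun z _ => hMnn z) (Finset.mem_univ z0)))
    have hk2' : Real.logb 2 (∑ z, ⨆ x, P2 x z) ≤ -k2 := by
      simp only [HminCond] at hk2
      linarith
    exact (Real.logb_le_iff_le_rpow one_lt_two hpos).mp hk2'
  -- Step: expansion of ∑_u D²
  have expand : ∀ x1 z, ∑ u, (D x1 u z)^2
      = (∑ u, (Q x1 u z)^2) - ((2:ℝ)^m)⁻¹ * (PZ z)^2 := by
    intro x1 z
    have h2m : ((2:ℝ)^m) ≠ 0 := by positivity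
    calc ∑ u, (D x1 u z)^2
        = ∑ u, ((Q x1 u z)^2 - (2*(((2:ℝ)^m)⁻¹ * PZ z)) * Q x1 u z
            + (((2:ℝ)^m)⁻¹ * PZ z)^2) := by
          refine Finset.sum_congr rfl fun u _ => ?_
          simp only [hD]
          ring
      _ = (∑ u, (Q x1 u z)^2) - (2*(((2:ℝ)^m)⁻¹ * PZ z)) * (∑ u, Q x1 u z)
            + ((Finset.univ : Finset (BS m)).card : ℝ) * (((2:ℝ)^m)⁻¹ * PZ z)^2 := by
          rw [Finset.sum_add_distrib, Finset.sum_sub_distrib, ← Finset.mul_sum,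
            Finset.sum_const, nsmul_eq_mul]
      _ = (∑ u, (Q x1 u z)^2) - ((2:ℝ)^m)⁻¹ * (PZ z)^2 := by
          rw [hQsum x1 z, hcardm]
          field_simp
          ring
  -- Step: collision bound
  have core : ∀ z, ∑ x1, ∑ u, (D x1 u z)^2 ≤ (2:ℝ)^n1 * ∑ x2, (P2 x2 z)^2 := by
    intro z
    have hQQ : ∑ x1, ∑ u, (Q x1 u z)^2
        = ∑ x2, ∑ x2', ((Finset.univ.filter fun x1 => f x1 x2 = f x1 x2').card : ℝ)
            * (P2 x2 z * P2 x2' z) := by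
      have h1 : ∀ x1, ∑ u, (Q x1 u z)^2
          = ∑ x2, ∑ x2', if f x1 x2 = f x1 x2' then P2 x2 z * P2 x2' z else 0 := by
        intro x1
        simp only [hQ]
        exact aux_fiber_sq (fun x2 => f x1 x2) (fun x2 => P2 x2 z)
      calc ∑ x1, ∑ u, (Q x1 u z)^2
          = ∑ x1, ∑ x2, ∑ x2', if f x1 x2 = f x1 x2' then P2 x2 z * P2 x2' z else 0 :=
            Finset.sum_congr rfl fun x1 _ => h1 x1
        _ = ∑ x2, ∑ x1, ∑ x2', if f x1 x2 = f x1 x2' then P2 x2 z * P2 x2' z else 0 :=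
            Finset.sum_comm
        _ = ∑ x2, ∑ x2', ∑ x1, if f x1 x2 = f x1 x2' then P2 x2 z * P2 x2' z else 0 :=
            Finset.sum_congr rfl fun x2 _ => Finset.sum_comm
        _ = ∑ x2, ∑ x2', ((Finset.univ.filter fun x1 => f x1 x2 = f x1 x2').card : ℝ)
              * (P2 x2 z * P2 x2' z) := by
            refine Finset.sum_congr rfl fun x2 _ => Finset.sum_congr rfl fun x2' _ => ?_
            rw [← Finset.sum_filter, Finset.sum_const, nsmul_eq_mul]
    have hsum_expand : ∑ x1, ∑ u, (D x1 u z)^2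
        = (∑ x1, ∑ u, (Q x1 u z)^2) - (2:ℝ)^n1 * (((2:ℝ)^m)⁻¹ * (PZ z)^2) := by
      calc ∑ x1, ∑ u, (D x1 u z)^2
          = ∑ x1, ((∑ u, (Q x1 u z)^2) - ((2:ℝ)^m)⁻¹ * (PZ z)^2) :=
            Finset.sum_congr rfl fun x1 _ => expand x1 z
        _ = _ := by
            rw [Finset.sum_sub_distrib, Finset.sum_const, nsmul_eq_mul, hcard1]
    rw [hsum_expand, hQQ]
    have hbound : ∑ x2, ∑ x2', ((Finset.univ.filter fun x1 => f x1 x2 = f x1 x2').card : ℝ)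
            * (P2 x2 z * P2 x2' z)
        ≤ ∑ x2, ∑ x2', ((2:ℝ)^n1 * ((2:ℝ)^m)⁻¹ + (if x2 = x2' then (2:ℝ)^n1 else 0))
            * (P2 x2 z * P2 x2' z) := by
      refine Finset.sum_le_sum fun x2 _ => Finset.sum_le_sum fun x2' _ =>
        mul_le_mul_of_nonneg_right ?_ (mul_nonneg (hP2nn _ _) (hP2nn _ _))
      by_cases hxx : x2 = x2'
      · rw [if_pos hxx]
        have hcle : ((Finset.univ.filter fun x1 => f x1 x2 = f x1 x2').card : ℝ)
            ≤ (2:ℝ)^n1 := by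
          have h := Finset.card_filter_le Finset.univ (fun x1 => f x1 x2 = f x1 x2')
          calc ((Finset.univ.filter fun x1 => f x1 x2 = f x1 x2').card : ℝ)
              ≤ ((Finset.univ : Finset (BS n1)).card : ℝ) := by exact_mod_cast h
            _ = (2:ℝ)^n1 := hcard1
        have hge : (0:ℝ) ≤ (2:ℝ)^n1 * ((2:ℝ)^m)⁻¹ := by positivity
        linarith
      · rw [if_neg hxx, add_zero]
        have h := huniv x2 x2' hxx
        rw [div_le_iff₀ (by positivity : (0:ℝ) < 2^n1)] at h
        calc ((Finset.univ.filter fun x1 => f x1 x2 = f x1 x2').card : ℝ)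
            ≤ ((2:ℝ)^m)⁻¹ * (2:ℝ)^n1 := h
          _ = (2:ℝ)^n1 * ((2:ℝ)^m)⁻¹ := mul_comm _ _
    refine le_trans (sub_le_sub_right hbound _) (le_of_eq ?_)
    have hexp : ∑ x2, ∑ x2', ((2:ℝ)^n1 * ((2:ℝ)^m)⁻¹ + (if x2 = x2' then (2:ℝ)^n1 else 0))
            * (P2 x2 z * P2 x2' z)
        = (2:ℝ)^n1 * ((2:ℝ)^m)⁻¹ * (PZ z)^2 + (2:ℝ)^n1 * ∑ x2, (P2 x2 z)^2 := by
      simp only [add_mul, ite_mul, zero_mul, Finset.sum_add_distrib]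
      congr 1
      · rw [sq]
        simp only [hPZ]
        rw [Finset.sum_mul_sum]
        rw [Finset.mul_sum]
        exact Finset.sum_congr rfl fun x2 _ => by rw [Finset.mul_sum]
      · rw [Finset.mul_sum]
        refine Finset.sum_congr rfl fun x2 _ => ?_
        rw [Finset.sum_ite_eq]
        simp [sq]
    rw [hexp]
    ring
  -- Step C : total weight bound
  have hC : ∑ x1, W x1 ≤ (2:ℝ)^n1 * (2:ℝ)^(-k2) := by
    have swap : ∑ x1, W x1 = ∑ z, (∑ x1, ∑ u, (D x1 u z)^2) / PZ z := by
      simp only [hW]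
      rw [Finset.sum_comm]
      rw [Fintype.sum_prod_type]
      rw [Finset.sum_comm]
      refine Finset.sum_congr rfl fun z _ => ?_
      dsimp only
      rw [Finset.sum_div, Finset.sum_comm]
      exact Finset.sum_congr rfl fun x1 _ => (Finset.sum_div _ _ _).symm
    rw [swap]
    have hz : ∀ z, (∑ x1, ∑ u, (D x1 u z)^2) / PZ z ≤ (2:ℝ)^n1 * M z := by
      intro z
      by_cases hz0 : PZ z = 0
      · have hD0 : ∀ x1 u, D x1 u z = 0 := by
          intro x1 u
          have hQ0 : Q x1 u z = 0 :=
            Finset.sum_eq_zero fun x2 _ => hPZzero z hz0 x2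
          simp only [hD]
          rw [hQ0, hz0]
          ring
        have : ∑ x1, ∑ u, (D x1 u z)^2 = 0 :=
          Finset.sum_eq_zero fun x1 _ => Finset.sum_eq_zero fun u _ => by
            rw [hD0 x1 u]; ring
        rw [this, zero_div]
        exact mul_nonneg (by positivity) (hMnn z)
      · have hpos : 0 < PZ z := (hPZnn z).lt_of_ne (Ne.symm hz0)
        rw [div_le_iff₀ hpos]
        calc ∑ x1, ∑ u, (D x1 u z)^2 ≤ (2:ℝ)^n1 * ∑ x2, (P2 x2 z)^2 := core z
          _ ≤ (2:ℝ)^n1 * (M z * PZ z) := by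
              refine mul_le_mul_of_nonneg_left ?_ (by positivity)
              calc ∑ x2, (P2 x2 z)^2 ≤ ∑ x2, M z * P2 x2 z :=
                  Finset.sum_le_sum fun x2 _ => by
                    rw [sq]
                    exact mul_le_mul_of_nonneg_right (hMle x2 z) (hP2nn x2 z)
                _ = M z * PZ z := by rw [← Finset.mul_sum]
          _ = (2:ℝ)^n1 * M z * PZ z := by ring
    calc ∑ z, (∑ x1, ∑ u, (D x1 u z)^2) / PZ z ≤ ∑ z, (2:ℝ)^n1 * M z :=
        Finset.sum_le_sum fun z _ => hz z
      _ = (2:ℝ)^n1 * ∑ z, M z := by rw [Finset.mul_sum]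
      _ ≤ (2:ℝ)^n1 * (2:ℝ)^(-k2) := mul_le_mul_of_nonneg_left hMsum (by positivity)
  -- Step A : per-x1 Cauchy-Schwarz
  have hA : ∀ x1, ∑ q : BS m × Z2, |D x1 q.1 q.2|
      ≤ Real.sqrt ((2:ℝ)^m) * Real.sqrt (W x1) := by
    intro x1
    have point : ∀ q : BS m × Z2,
        |D x1 q.1 q.2| = Real.sqrt (PZ q.2) * (|D x1 q.1 q.2| / Real.sqrt (PZ q.2)) := by
      intro q
      by_cases hz0 : PZ q.2 = 0
      · have hQ0 : Q x1 q.1 q.2 = 0 :=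
          Finset.sum_eq_zero fun x2 _ => hPZzero q.2 hz0 x2
        have hD0 : D x1 q.1 q.2 = 0 := by
          simp only [hD]
          rw [hQ0, hz0]
          ring
        rw [hD0]
        simp
      · have hpos : 0 < PZ q.2 := (hPZnn q.2).lt_of_ne (Ne.symm hz0)
        have hne : Real.sqrt (PZ q.2) ≠ 0 := (Real.sqrt_pos.mpr hpos).ne'
        rw [mul_comm, div_mul_cancel₀ _ hne]
    calc ∑ q : BS m × Z2, |D x1 q.1 q.2|
        = ∑ q : BS m × Z2, Real.sqrt (PZ q.2) * (|D x1 q.1 q.2| / Real.sqrt (PZ q.2)) :=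
          Finset.sum_congr rfl fun q _ => point q
      _ ≤ Real.sqrt (∑ q : BS m × Z2, Real.sqrt (PZ q.2)^2)
            * Real.sqrt (∑ q : BS m × Z2, (|D x1 q.1 q.2| / Real.sqrt (PZ q.2))^2) :=
          Real.sum_mul_le_sqrt_mul_sqrt _ _ _
      _ = Real.sqrt ((2:ℝ)^m) * Real.sqrt (W x1) := by
          congr 2
          · calc ∑ q : BS m × Z2, Real.sqrt (PZ q.2)^2
                = ∑ q : BS m × Z2, PZ q.2 :=
                  Finset.sum_congr rfl fun q _ => Real.sq_sqrt (hPZnn q.2)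
              _ = ∑ u : BS m, ∑ z : Z2, PZ (u, z).2 := by rw [Fintype.sum_prod_type]
              _ = ∑ u : BS m, ∑ z, PZ z := rfl
              _ = (2:ℝ)^m := by
                  rw [Finset.sum_congr rfl fun (u : BS m) _ => hPZsum]
                  rw [Finset.sum_const, nsmul_eq_mul, hcardm, mul_one]
          · simp only [hW]
            refine Finset.sum_congr rfl fun q _ => ?_
            rw [div_pow, sq_abs, Real.sq_sqrt (hPZnn q.2)]
  -- Step B
  have hB : ∑ x1, P1 x1 * Real.sqrt (W x1)
      ≤ Real.sqrt ((2:ℝ)^(-k1)) * Real.sqrt ((2:ℝ)^n1 * (2:ℝ)^(-k2)) := by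
    calc ∑ x1, P1 x1 * Real.sqrt (W x1)
        ≤ Real.sqrt (∑ x1, (P1 x1)^2) * Real.sqrt (∑ x1, Real.sqrt (W x1)^2) :=
          Real.sum_mul_le_sqrt_mul_sqrt _ _ _
      _ = Real.sqrt (∑ x1, (P1 x1)^2) * Real.sqrt (∑ x1, W x1) := by
          rw [Finset.sum_congr rfl fun x1 _ => Real.sq_sqrt (hWnn x1)]
      _ ≤ Real.sqrt ((2:ℝ)^(-k1)) * Real.sqrt ((2:ℝ)^n1 * (2:ℝ)^(-k2)) := by
          have h1 : ∑ x1, (P1 x1)^2 ≤ (2:ℝ)^(-k1) := by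
            calc ∑ x1, (P1 x1)^2 ≤ ∑ x1, (2:ℝ)^(-k1) * P1 x1 :=
                Finset.sum_le_sum fun x1 _ => by
                  rw [sq]
                  exact mul_le_mul_of_nonneg_right (hP1le x1) (hP1nn x1)
              _ = (2:ℝ)^(-k1) := by rw [← Finset.mul_sum, hP1sum, mul_one]
          exact mul_le_mul (Real.sqrt_le_sqrt h1) (Real.sqrt_le_sqrt hC)
            (Real.sqrt_nonneg _) (Real.sqrt_nonneg _)
  -- put everything together
  have hTVeq : ∀ x1, TV (fun q : BS m × Z2 =>
        ∑ x2 ∈ Finset.univ.filter (fun x2 : BS n2 => f x1 x2 = q.1), P2 x2 q.2)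
      (fun q : BS m × Z2 => ((2:ℝ)^m)⁻¹ * ∑ x2, P2 x2 q.2)
      = (1/2) * ∑ q : BS m × Z2, |D x1 q.1 q.2| := by
    intro x1
    simp only [TV, hD, hQ, hPZ]
  have hfinal : (1/2) * Real.sqrt ((2:ℝ)^m)
      * (Real.sqrt ((2:ℝ)^(-k1)) * Real.sqrt ((2:ℝ)^n1 * (2:ℝ)^(-k2)))
      = (2:ℝ) ^ (-(2 + k1 + k2 - (n1:ℝ) - (m:ℝ))/2) := by
    have h2 : (0:ℝ) ≤ 2 := by norm_num
    have e1 : Real.sqrt ((2:ℝ)^m) = (2:ℝ) ^ ((m:ℝ) * (1/2)) := by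
      rw [← Real.rpow_natCast 2 m, Real.rpow_mul h2, Real.rpow_natCast]
      rw [Real.sqrt_eq_rpow]
    have e2 : Real.sqrt ((2:ℝ)^(-k1)) = (2:ℝ) ^ ((-k1) * (1/2)) := by
      rw [Real.rpow_mul h2, Real.sqrt_eq_rpow]
    have e3 : Real.sqrt ((2:ℝ)^n1 * (2:ℝ)^(-k2)) = (2:ℝ) ^ (((n1:ℝ) + (-k2)) * (1/2)) := by
      rw [Real.rpow_mul h2, Real.rpow_add (by norm_num : (0:ℝ) < 2), Real.rpow_natCast]
      rw [Real.sqrt_eq_rpow]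
    have e0 : (1/2 : ℝ) = (2:ℝ) ^ (-1 : ℝ) := by
      rw [Real.rpow_neg_one]
      norm_num
    rw [e0, e1, e2, e3, ← Real.rpow_add (by norm_num : (0:ℝ) < 2),
      ← Real.rpow_add (by norm_num : (0:ℝ) < 2), ← Real.rpow_add (by norm_num : (0:ℝ) < 2)]
    congr 1
    ring
  calc ∑ x1, P1 x1 *
      TV (fun q : BS m × Z2 =>
            ∑ x2 ∈ Finset.univ.filter (fun x2 : BS n2 => f x1 x2 = q.1), P2 x2 q.2)
         (fun q : BS m × Z2 => ((2:ℝ)^m)⁻¹ * ∑ x2, P2 x2 q.2)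
      ≤ ∑ x1, P1 x1 * ((1/2) * (Real.sqrt ((2:ℝ)^m) * Real.sqrt (W x1))) := by
        refine Finset.sum_le_sum fun x1 _ => mul_le_mul_of_nonneg_left ?_ (hP1nn x1)
        rw [hTVeq x1]
        exact mul_le_mul_of_nonneg_left (hA x1) (by norm_num)
    _ = (1/2) * Real.sqrt ((2:ℝ)^m) * ∑ x1, P1 x1 * Real.sqrt (W x1) := by
        rw [Finset.mul_sum]
        exact Finset.sum_congr rfl fun x1 _ => by ring
    _ ≤ (1/2) * Real.sqrt ((2:ℝ)^m)
          * (Real.sqrt ((2:ℝ)^(-k1)) * Real.sqrt ((2:ℝ)^n1 * (2:ℝ)^(-k2))) := by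
        refine mul_le_mul_of_nonneg_left hB (by positivity)
    _ = (2:ℝ) ^ (-(2 + k1 + k2 - (n1:ℝ) - (m:ℝ))/2) := hfinal
end
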